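/- arXiv:1608.01256 — 3 statements merged into one kernel-verified Lean document; each statement's English description precedes it below -/
import Mathlib

section
/- Let G be a group, H ≤ G a subgroup, and g ∈ G such that the double coset HgH is a union of finitely many right cosets of H. Then for every h ∈ H there exists a positive integer κ such that (g h g⁻¹)^κ ∈ H. -/
theorem conj_pow_mem_of_doubleCoset_finite {G : Type*} [Group G] (H : Subgroup G) (g : G)
    (T : Finset G)
    (hT : ∀ h₁ ∈ H, ∀ h₂ ∈ H, ∃ t ∈ T, ∃ h ∈ H, h₁ * g * h₂ = h * t)
    (h : G) (hh : h ∈ H) :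
    ∃ κ : ℕ, 0 < κ ∧ (g * h * g⁻¹) ^ κ ∈ H := by
  have key : ∀ n : ℕ, ∃ t ∈ T, ∃ a ∈ H, g * h ^ n = a * t := by
    intro n
    obtain ⟨t, ht, a, ha, heq⟩ := hT 1 H.one_mem (h ^ n) (H.pow_mem hh n)
    exact ⟨t, ht, a, ha, by simpa using heq⟩
  choose f hfT a haH heq using key
  obtain ⟨n, m, hne, hfe⟩ :=
    Finite.exists_ne_map_eq_of_infinite (f := fun n : ℕ => (⟨f n, hfT n⟩ : T))
  have hfe' : f n = f m := by simpa using congrArg Subtype.val hfe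
  rcases hne.lt_or_gt with hlt | hlt
  · refine ⟨m - n, by omega, ?_⟩
    have hpow : h ^ (m - n) * h ^ n = h ^ m := by rw [← pow_add]; congr 1; omega
    have hmem : g * h ^ m * (g * h ^ n)⁻¹ ∈ H := by
      rw [heq m, heq n, hfe']
      have : a m * f m * (a n * f m)⁻¹ = a m * (a n)⁻¹ := by group
      rw [this]
      exact H.mul_mem (haH m) (H.inv_mem (haH n))
    have : (g * h * g⁻¹) ^ (m - n) = g * h ^ m * (g * h ^ n)⁻¹ := by
      rw [conj_pow, ← hpow]; group
    rwa [this]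
  · refine ⟨n - m, by omega, ?_⟩
    have hpow : h ^ (n - m) * h ^ m = h ^ n := by rw [← pow_add]; congr 1; omega
    have hmem : g * h ^ n * (g * h ^ m)⁻¹ ∈ H := by
      rw [heq m, heq n, hfe']
      have : a n * f m * (a m * f m)⁻¹ = a n * (a m)⁻¹ := by group
      rw [this]
      exact H.mul_mem (haH n) (H.inv_mem (haH m))
    have : (g * h * g⁻¹) ^ (n - m) = g * h ^ n * (g * h ^ m)⁻¹ := by
      rw [conj_pow, ← hpow]; group
    rwa [this]
end

section
/- In the discrete Heisenberg-type group H(s₁,…,sₙ) with underlying set ℤⁿ × ℤⁿ × ℤ and multiplication (u,v,z)(u',v',z') = (u+u', v+v', z+z'+Σ sᵢ uᵢ v'ᵢ) where each sᵢ is a nonzero integer, the commutator subgroup equals {(0,0,s₁ z) : z ∈ ℤ}, provided s₁ divides every sᵢ. -/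
/-- The discrete Heisenberg-type group `H(s₁, …, sₙ)` on `ℤⁿ × ℤⁿ × ℤ`. -/
@[ext] structure Heis (n : ℕ) (s : Fin n → ℤ) where
  u : Fin n → ℤ
  v : Fin n → ℤ
  z : ℤ

namespace Heis

variable {n : ℕ} {s : Fin n → ℤ}

instance : Mul (Heis n s) :=
  ⟨fun a b => ⟨a.u + b.u, a.v + b.v, a.z + b.z + ∑ i, s i * a.u i * b.v i⟩⟩

instance : One (Heis n s) := ⟨⟨0, 0, 0⟩⟩

instance : Inv (Heis n s) :=
  ⟨fun a => ⟨-a.u, -a.v, -a.z + ∑ i, s i * a.u i * a.v i⟩⟩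

@[simp] lemma mul_u (a b : Heis n s) : (a * b).u = a.u + b.u := rfl
@[simp] lemma mul_v (a b : Heis n s) : (a * b).v = a.v + b.v := rfl
@[simp] lemma mul_z (a b : Heis n s) :
    (a * b).z = a.z + b.z + ∑ i, s i * a.u i * b.v i := rfl
@[simp] lemma one_u : (1 : Heis n s).u = 0 := rfl
@[simp] lemma one_v : (1 : Heis n s).v = 0 := rfl
@[simp] lemma one_z : (1 : Heis n s).z = 0 := rfl
@[simp] lemma inv_u (a : Heis n s) : a⁻¹.u = -a.u := rfl
@[simp] lemma inv_v (a : Heis n s) : a⁻¹.v = -a.v := rfl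
@[simp] lemma inv_z (a : Heis n s) :
    a⁻¹.z = -a.z + ∑ i, s i * a.u i * a.v i := rfl

instance : Group (Heis n s) where
  mul_assoc a b c := by
    ext <;>
      simp [Pi.add_apply, mul_add, add_mul, Finset.sum_add_distrib] <;> ring
  one_mul a := by ext <;> simp
  mul_one a := by ext <;> simp
  inv_mul_cancel a := by
    ext <;> simp [Pi.add_apply, mul_neg, neg_mul, Finset.sum_neg_distrib]

end Heis

open scoped commutatorElement

lemma heis_commutatorElement {n : ℕ} {s : Fin n → ℤ} (a b : Heis n s) :
    ⁅a, b⁆ = ⟨0, 0, ∑ i, s i * (a.u i * b.v i - b.u i * a.v i)⟩ := by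
  show a * b * a⁻¹ * b⁻¹ = _
  ext i <;>
    simp [Pi.add_apply, Pi.neg_apply, mul_add, add_mul, mul_sub, sub_mul,
      Finset.sum_add_distrib, Finset.sum_sub_distrib, mul_neg, neg_mul] <;>
    ring

theorem heis_commutator_eq {n : ℕ} (s : Fin (n + 1) → ℤ)
    (hpos : ∀ i, 0 < s i) (hdvd : ∀ i, s 0 ∣ s i) :
    (commutator (Heis (n + 1) s) : Set (Heis (n + 1) s)) =
      {g : Heis (n + 1) s | ∃ m : ℤ, g = ⟨0, 0, s 0 * m⟩} := by
  have hS : ∀ g : Heis (n + 1) s,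
      (∃ m : ℤ, g = ⟨0, 0, s 0 * m⟩) ↔ (g.u = 0 ∧ g.v = 0 ∧ s 0 ∣ g.z) := by
    intro g
    constructor
    · rintro ⟨m, rfl⟩; exact ⟨rfl, rfl, ⟨m, rfl⟩⟩
    · rintro ⟨hu, hv, m, hm⟩; exact ⟨m, by ext <;> simp [hu, hv, hm]⟩
  let S : Subgroup (Heis (n + 1) s) :=
    { carrier := {g | g.u = 0 ∧ g.v = 0 ∧ s 0 ∣ g.z}
      one_mem' := ⟨rfl, rfl, dvd_zero _⟩
      mul_mem' := by
        rintro a b ⟨hau, hav, haz⟩ ⟨hbu, hbv, hbz⟩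
        refine ⟨by simp [hau, hbu], by simp [hav, hbv], ?_⟩
        simp [hau, hbu, hav, hbv]
        exact dvd_add haz hbz
      inv_mem' := by
        rintro a ⟨hau, hav, haz⟩
        refine ⟨by simp [hau], by simp [hav], ?_⟩
        simp [hau, hav]
        exact haz }
  apply Set.eq_of_subset_of_subset
  · intro g hg
    rw [Set.mem_setOf_eq, hS]
    have : commutator (Heis (n + 1) s) ≤ S := by
      rw [commutator_def, Subgroup.commutator_le]
      intro a _ b _
      rw [heis_commutatorElement]
      refine ⟨rfl, rfl, ?_⟩
      show s 0 ∣ ∑ i, s i * (a.u i * b.v i - b.u i * a.v i)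
      exact Finset.dvd_sum fun i _ => dvd_mul_of_dvd_left (hdvd i) _
    exact this hg
  · rintro g hg
    rw [Set.mem_setOf_eq, hS] at hg
    obtain ⟨hu, hv, m, hm⟩ := hg
    have : g = ⁅(⟨Pi.single 0 1, 0, 0⟩ : Heis (n + 1) s), ⟨0, Pi.single 0 m, 0⟩⁆ := by
      rw [heis_commutatorElement]
      ext i <;> simp [hu, hv, hm]
      rw [Finset.sum_eq_single 0]
      · simp
      · intro j _ hj; simp [Pi.single_apply, hj]
      · simp
    rw [this]
    exact Subgroup.commutator_mem_commutator (Subgroup.mem_top _) (Subgroup.mem_top _)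
end

section
/- Let G be a finitely generated nilpotent group and H ≤ K ≤ G subgroups such that some positive power of each element of a generating set of K lies in H. Then H has finite index in K and √H = √K. -/
/-- The radical (isolated closure) of a subgroup: the smallest subgroup containing `H`
that is radical, i.e. closed under taking roots. -/
def Subgroup.radical {G : Type*} [Group G] (H : Subgroup G) : Subgroup G :=
  sInf {K : Subgroup G | H ≤ K ∧ ∀ (x : G) (m : ℕ), 0 < m → x ^ m ∈ K → x ∈ K}

namespace IsolPf

open Subgroup Pointwise commutatorElement

section Radical

variable {G : Type*} [Group G] (H K : Subgroup G)

theorem le_radical : H ≤ H.radical :=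
  le_sInf fun _ hL => hL.1

theorem radical_root {x : G} {m : ℕ} (hm : 0 < m) (hx : x ^ m ∈ H.radical) : x ∈ H.radical := by
  rw [Subgroup.radical, Subgroup.mem_sInf] at hx ⊢
  exact fun L hL => hL.2 x m hm (hx L hL)

theorem radical_mono {H K : Subgroup G} (h : H ≤ K) : H.radical ≤ K.radical :=
  sInf_le_sInf fun L hL => ⟨le_trans h hL.1, hL.2⟩

theorem radical_le_radical_of_le {H K : Subgroup G} (h : K ≤ H.radical) :
    K.radical ≤ H.radical :=
  sInf_le ⟨h, fun x m hm hx => radical_root H hm hx⟩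

end Radical

section CommIdents

variable {G : Type*} [Group G]

theorem comm_mul_right (x y z : G) : ⁅x, y*z⁆ = ⁅x,y⁆ * (y * ⁅x,z⁆ * y⁻¹) := by group

theorem comm_mul_left (x y z : G) : ⁅x*y, z⁆ = (x * ⁅y,z⁆ * x⁻¹) * ⁅x,z⁆ := by group

theorem comm_inv_right (x y : G) : ⁅x, y⁻¹⁆ = y⁻¹ * ⁅x,y⁆⁻¹ * (y⁻¹)⁻¹ := by group

theorem comm_inv_left (x y : G) : ⁅x⁻¹, y⁆ = x⁻¹ * ⁅x,y⁆⁻¹ * (x⁻¹)⁻¹ := by group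

theorem conj_eq_comm_mul (g x : G) : g * x * g⁻¹ = ⁅g, x⁆ * x := by group

/-- Commutator with a central factor on the left. -/
theorem comm_central_left (h a y : G) (ha : ∀ g : G, a * g = g * a) :
    ⁅h * a, y⁆ = ⁅h, y⁆ := by
  simp only [commutatorElement_def, mul_inv_rev]
  calc h * a * y * (a⁻¹ * h⁻¹) * y⁻¹
      = h * (a * y) * a⁻¹ * h⁻¹ * y⁻¹ := by group
    _ = h * (y * a) * a⁻¹ * h⁻¹ * y⁻¹ := by rw [ha y]
    _ = h * y * h⁻¹ * y⁻¹ := by group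

/-- Commutator with a central factor on the right. -/
theorem comm_central_right (x k b : G) (hb : ∀ g : G, b * g = g * b) :
    ⁅x, k * b⁆ = ⁅x, k⁆ := by
  simp only [commutatorElement_def, mul_inv_rev]
  calc x * (k * b) * x⁻¹ * (b⁻¹ * k⁻¹)
      = x * k * (b * x⁻¹) * b⁻¹ * k⁻¹ := by group
    _ = x * k * (x⁻¹ * b) * b⁻¹ * k⁻¹ := by rw [hb x⁻¹]
    _ = x * k * x⁻¹ * k⁻¹ := by group

theorem comm_pow_right (x y : G) (h : ∀ (n : ℕ) (w : G), ⁅x, y ^ n⁆ * w = w * ⁅x, y ^ n⁆) :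
    ∀ n : ℕ, ⁅x, y ^ n⁆ = ⁅x, y⁆ ^ n := by
  intro n
  induction n with
  | zero => simp
  | succ n ih =>
    have hc : y * ⁅x, y ^ n⁆ * y⁻¹ = ⁅x, y ^ n⁆ := by
      rw [← h n y]; group
    rw [pow_succ' y n, comm_mul_right, hc, ih, pow_succ']

theorem comm_pow_left (x y : G) (h : ∀ (n : ℕ) (w : G), ⁅x ^ n, y⁆ * w = w * ⁅x ^ n, y⁆) :
    ∀ n : ℕ, ⁅x ^ n, y⁆ = ⁅x, y⁆ ^ n := by
  intro n
  induction n with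
  | zero => simp
  | succ n ih =>
    have hc : x * ⁅x ^ n, y⁆ * x⁻¹ = ⁅x ^ n, y⁆ := by
      rw [← h n x]; group
    rw [pow_succ' x n, comm_mul_left, hc, ih, ← pow_succ]

end CommIdents

section Comms

variable {G : Type*} [Group G]

/-- Iterated left-normed commutators of elements of `S`. -/
def comms (S : Set G) : ℕ → Set G
  | 0 => S
  | k + 1 => Set.image2 (fun x s => ⁅x, s⁆) (comms S k) S

theorem comms_finite {S : Set G} (hS : S.Finite) : ∀ k, (comms S k).Finite
  | 0 => hS
  | k + 1 => Set.Finite.image2 _ (comms_finite hS k) hS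

theorem lcs_succ_comm (k : ℕ) :
    (⊤ : Subgroup G).lowerCentralSeries (k + 1) = ⁅(⊤ : Subgroup G).lowerCentralSeries k, (⊤ : Subgroup G)⁆ := rfl

theorem comms_subset_lcs (S : Set G) : ∀ k, comms S k ⊆ (⊤ : Subgroup G).lowerCentralSeries k
  | 0 => fun x _ => Subgroup.mem_top x
  | k + 1 => by
    rintro _ ⟨x, hx, s, _, rfl⟩
    rw [lcs_succ_comm]
    exact commutator_mem_commutator (comms_subset_lcs S k hx) (Subgroup.mem_top s)

/-- A subgroup generated by a subset of `(⊤ : Subgroup G).lowerCentralSeries j` joined with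
`(⊤ : Subgroup G).lowerCentralSeries (j+1)` is normal. -/
theorem normal_closure_sup {T : Set G} {j : ℕ} (hT : T ⊆ (⊤ : Subgroup G).lowerCentralSeries j) :
    (Subgroup.closure T ⊔ (⊤ : Subgroup G).lowerCentralSeries (j + 1)).Normal := by
  set M := Subgroup.closure T ⊔ (⊤ : Subgroup G).lowerCentralSeries (j + 1) with hM
  have hle1 : Subgroup.closure T ≤ M := le_sup_left
  have hle2 : (⊤ : Subgroup G).lowerCentralSeries (j + 1) ≤ M := le_sup_right
  constructor
  intro n hn g
  have hn' : n ∈ Subgroup.closure (T ∪ ((⊤ : Subgroup G).lowerCentralSeries (j + 1) : Set G)) := by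
    rwa [Subgroup.closure_union, Subgroup.closure_eq]
  clear hn
  induction hn' using closure_induction with
  | mem t ht =>
    rcases ht with ht | ht
    · have h1 : g * t * g⁻¹ = t * ⁅t⁻¹, g⁆ := by group
      have h2 : ⁅t⁻¹, g⁆ ∈ (⊤ : Subgroup G).lowerCentralSeries (j + 1) := by
        rw [lcs_succ_comm]
        exact commutator_mem_commutator (inv_mem (hT ht)) (Subgroup.mem_top g)
      rw [h1]
      exact mul_mem (hle1 (subset_closure ht)) (hle2 h2)
    · exact hle2 ((Subgroup.lowerCentralSeries_normal ⊤ (j + 1) : ((⊤ : Subgroup G).lowerCentralSeries (j+1)).Normal).conj_mem _ ht g)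
  | one => simpa using one_mem M
  | mul a b _ _ pa pb =>
    have h3 : g * (a * b) * g⁻¹ = (g * a * g⁻¹) * (g * b * g⁻¹) := by group
    rw [h3]; exact mul_mem pa pb
  | inv a _ pa =>
    have h3 : g * a⁻¹ * g⁻¹ = (g * a * g⁻¹)⁻¹ := by group
    rw [h3]; exact inv_mem pa

/-- If `G = ⟨S⟩`, then `γ_k(G) ≤ ⟨comms S k⟩ ⊔ γ_{k+1}(G)`. -/
theorem lcs_le_comms (S : Set G) (hgen : Subgroup.closure S = ⊤) :
    ∀ k, (⊤ : Subgroup G).lowerCentralSeries k ≤ Subgroup.closure (comms S k) ⊔ (⊤ : Subgroup G).lowerCentralSeries (k + 1)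
  | 0 => by
    intro x _
    have hx : x ∈ Subgroup.closure S := by rw [hgen]; trivial
    exact (le_sup_left : Subgroup.closure (comms S 0) ≤ _) hx
  | k + 1 => by
    have hMn : (Subgroup.closure (comms S (k + 1)) ⊔ (⊤ : Subgroup G).lowerCentralSeries (k + 2)).Normal :=
      normal_closure_sup (comms_subset_lcs S (k + 1))
    set M := Subgroup.closure (comms S (k + 1)) ⊔ (⊤ : Subgroup G).lowerCentralSeries (k + 2) with hM
    have hle1 : Subgroup.closure (comms S (k + 1)) ≤ M := le_sup_left
    have hle2 : (⊤ : Subgroup G).lowerCentralSeries (k + 2) ≤ M := le_sup_right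
    rw [lcs_succ_comm]
    refine commutator_le.mpr fun x hx y hytop => ?_
    clear hytop
    -- first reduce x
    have hx' : x ∈ Subgroup.closure (comms S k ∪ ((⊤ : Subgroup G).lowerCentralSeries (k + 1) : Set G)) := by
      rw [Subgroup.closure_union, Subgroup.closure_eq]
      exact lcs_le_comms S hgen k hx
    clear hx
    induction hx' using closure_induction with
    | mem z hz =>
      rcases hz with hz | hz
      · -- z ∈ comms S k; now reduce y over closure S = ⊤
        have hy : y ∈ Subgroup.closure S := by rw [hgen]; trivial
        induction hy using closure_induction with
        | mem s hs =>
          exact hle1 (subset_closure ⟨z, hz, s, hs, rfl⟩)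
        | one => simpa using one_mem M
        | mul u v _ _ pu pv =>
          rw [comm_mul_right]
          exact mul_mem pu (hMn.conj_mem _ pv u)
        | inv u _ pu =>
          rw [comm_inv_right]
          exact hMn.conj_mem _ (inv_mem pu) u⁻¹
      · -- z ∈ γ_{k+1}
        have : ⁅z, y⁆ ∈ (⊤ : Subgroup G).lowerCentralSeries (k + 2) := by
          rw [lcs_succ_comm]
          exact commutator_mem_commutator hz (Subgroup.mem_top y)
        exact hle2 this
    | one => simpa using one_mem M
    | mul a b _ _ pa pb =>
      rw [comm_mul_left]
      exact mul_mem (hMn.conj_mem _ pb a) pa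
    | inv a _ pa =>
      rw [comm_inv_left]
      exact hMn.conj_mem _ (inv_mem pa) a⁻¹

end Comms


section Abelian

/-- In a commutative group generated by a finite set each of whose elements has a
positive power in `H`, the subgroup `H` has finite index. -/
theorem abelian_case {G : Type*} [Group G] (hcomm : ∀ a b : G, a * b = b * a)
    (H : Subgroup G) (S : Set G) (hS : S.Finite) (hgen : Subgroup.closure S = ⊤)
    (hpow : ∀ s ∈ S, ∃ n : ℕ, 0 < n ∧ s ^ n ∈ H) : H.index ≠ 0 := by
  classical
  set n : G → ℕ := fun s => if h : s ∈ S then (hpow s h).choose else 1 with hn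
  have hn0 : ∀ s ∈ S, 0 < n s ∧ s ^ n s ∈ H := by
    intro s hs
    simp only [hn, dif_pos hs]
    exact (hpow s hs).choose_spec
  set N : ℕ := ∏ s ∈ hS.toFinset, n s with hN
  have hNpos : 0 < N := Finset.prod_pos fun s hs => (hn0 s (hS.mem_toFinset.mp hs)).1
  set φ : G →* G :=
    { toFun := fun g => g ^ N
      map_one' := one_pow N
      map_mul' := fun a b => Commute.mul_pow (hcomm a b) N } with hφ
  have hrange : φ.range ≤ H := by
    rw [MonoidHom.range_eq_map, ← hgen, MonoidHom.map_closure]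
    refine (Subgroup.closure_le H).mpr ?_
    rintro _ ⟨s, hs, rfl⟩
    obtain ⟨k, hk⟩ : n s ∣ N := Finset.dvd_prod_of_mem n (hS.mem_toFinset.mpr hs)
    show s ^ N ∈ H
    rw [hk, pow_mul]
    exact pow_mem (hn0 s hs).2 k
  haveI hBn : φ.range.Normal := by
    constructor
    intro x hx g
    have : g * x * g⁻¹ = x := by rw [hcomm g x]; group
    rwa [this]
  letI : CommGroup (G ⧸ φ.range) :=
    { (inferInstance : Group (G ⧸ φ.range)) with
      mul_comm := by
        intro a b
        obtain ⟨x, rfl⟩ := QuotientGroup.mk'_surjective φ.range a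
        obtain ⟨y, rfl⟩ := QuotientGroup.mk'_surjective φ.range b
        rw [← map_mul, ← map_mul, hcomm x y] }
  haveI : Group.FG G := Group.fg_iff.mpr ⟨S, hgen, hS⟩
  haveI : Group.FG (G ⧸ φ.range) :=
    Group.fg_of_surjective (QuotientGroup.mk'_surjective φ.range)
  have ht : Monoid.IsTorsion (G ⧸ φ.range) := by
    intro g
    obtain ⟨x, rfl⟩ := QuotientGroup.mk'_surjective φ.range g
    refine isOfFinOrder_iff_pow_eq_one.mpr ⟨N, hNpos, ?_⟩
    rw [← map_pow]
    rw [show ((QuotientGroup.mk' φ.range) (x ^ N) : G ⧸ φ.range) = 1 ↔ x ^ N ∈ φ.range from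
      QuotientGroup.eq_one_iff _]
    exact ⟨x, rfl⟩
  have : Finite (G ⧸ φ.range) := CommGroup.finite_of_fg_torsion _ ht
  have hr : φ.range.index ≠ 0 := by
    rw [Subgroup.index_eq_card]
    exact Nat.card_ne_zero.mpr ⟨inferInstance, inferInstance⟩
  intro h0
  exact hr (Nat.eq_zero_of_zero_dvd (h0 ▸ Subgroup.index_dvd_of_le hrange))

end Abelian

section Plumbing

variable {G : Type*} [Group G]

theorem exists_uniform_pow (B : Subgroup G) (h : B.index ≠ 0) :
    ∃ N : ℕ, 0 < N ∧ ∀ g : G, g ^ N ∈ B := by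
  haveI : B.FiniteIndex := ⟨h⟩
  refine ⟨B.normalCore.index, Nat.pos_of_ne_zero Subgroup.FiniteIndex.index_ne_zero, fun g => ?_⟩
  exact B.normalCore_le (Subgroup.pow_index_mem B.normalCore g)

theorem lcs_map_surjective {G' : Type*} [Group G'] (f : G →* G') (hf : Function.Surjective f) :
    ∀ k, Subgroup.map f ((⊤ : Subgroup G).lowerCentralSeries k) = (⊤ : Subgroup G').lowerCentralSeries k
  | 0 => by
    simpa using Subgroup.map_top_of_surjective f hf
  | k + 1 => by
    rw [lcs_succ_comm, lcs_succ_comm, Subgroup.map_commutator,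
      lcs_map_surjective f hf k, Subgroup.map_top_of_surjective f hf]

end Plumbing


universe u

/-- Main lemma: in a group whose lower central series terminates at `⊥` after `m` steps,
a subgroup containing positive powers of all elements of a finite generating set has
finite index. -/
theorem main_lemma (m : ℕ) :
    ∀ {G : Type u} [Group G] (H : Subgroup G) (S : Set G), S.Finite →
      Subgroup.closure S = ⊤ → (⊤ : Subgroup G).lowerCentralSeries m = ⊥ →
      (∀ s ∈ S, ∃ n : ℕ, 0 < n ∧ s ^ n ∈ H) → H.index ≠ 0 := by
  induction m with
  | zero =>
    intro G _ H S _ _ hbot _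
    have hx : ∀ x : G, x = 1 := fun x =>
      Subgroup.mem_bot.mp (hbot ▸ Subgroup.mem_top x)
    have hH : H = ⊤ := (Subgroup.eq_top_iff' H).mpr fun x => (hx x) ▸ H.one_mem
    rw [hH, Subgroup.index_top]
    exact one_ne_zero
  | succ m IH =>
    intro G _ H S hSfin hgen hbot hpow
    set A := (⊤ : Subgroup G).lowerCentralSeries m with hA
    -- A is central
    have hAc : ∀ a ∈ A, ∀ g : G, a * g = g * a := by
      intro a ha g
      have h1 : ⁅a, g⁆ ∈ (⊤ : Subgroup G).lowerCentralSeries (m + 1) := by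
        rw [lcs_succ_comm]
        exact commutator_mem_commutator ha (Subgroup.mem_top g)
      rw [hbot] at h1
      exact commutatorElement_eq_one_iff_commute.mp (Subgroup.mem_bot.mp h1)
    -- quotient step
    set π := QuotientGroup.mk' A with hπ
    have hπs : Function.Surjective π := QuotientGroup.mk'_surjective A
    have hQbot : (⊤ : Subgroup (G ⧸ A)).lowerCentralSeries m = ⊥ := by
      rw [← lcs_map_surjective π hπs m]
      rw [(Subgroup.map_eq_bot_iff _).mpr (le_of_eq (QuotientGroup.ker_mk' A).symm)]
    have hQind : (Subgroup.map π H).index ≠ 0 := by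
      refine IH (Subgroup.map π H) (π '' S) (hSfin.image π) ?_ hQbot ?_
      · rw [← MonoidHom.map_closure, hgen, Subgroup.map_top_of_surjective π hπs]
      · rintro _ ⟨s, hs, rfl⟩
        obtain ⟨nn, hnn, hmem⟩ := hpow s hs
        exact ⟨nn, hnn, by rw [← map_pow]; exact Subgroup.mem_map_of_mem π hmem⟩
    have hBind : (H ⊔ A).index ≠ 0 := by
      have h2 := Subgroup.index_comap_of_surjective (Subgroup.map π H) hπs
      rw [Subgroup.comap_map_eq, QuotientGroup.ker_mk'] at h2
      rw [h2]
      exact hQind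
    obtain ⟨N, hN0, hNmem⟩ := exists_uniform_pow _ hBind
    -- comms generate A
    have hcsub : comms S m ⊆ A := comms_subset_lcs S m
    have hgenA : Subgroup.closure (comms S m) = A := by
      refine le_antisymm ((Subgroup.closure_le _).mpr hcsub) ?_
      have h3 := lcs_le_comms S hgen m
      rw [← hA, hbot, sup_bot_eq] at h3
      exact h3
    -- each element of comms S m has a positive power in H
    have hcpow : ∀ t ∈ comms S m, ∃ M : ℕ, 0 < M ∧ t ^ M ∈ H := by
      cases m with
      | zero => exact hpow
      | succ m' =>
        rintro _ ⟨x, hx, s, hs, rfl⟩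
        have hxl : x ∈ (⊤ : Subgroup G).lowerCentralSeries m' := comms_subset_lcs S m' hx
        obtain ⟨nn, hnn0, hnH⟩ := hpow s hs
        have hxpow : ∀ j : ℕ, x ^ j ∈ (⊤ : Subgroup G).lowerCentralSeries m' := fun j => pow_mem hxl j
        have hAmem : ∀ (u : G), u ∈ (⊤ : Subgroup G).lowerCentralSeries m' → ∀ v : G, ⁅u, v⁆ ∈ A := by
          intro u hu v
          rw [hA, lcs_succ_comm]
          exact commutator_mem_commutator hu (Subgroup.mem_top v)
        have hcen1 : ∀ (k : ℕ) (w : G), ⁅x, s ^ k⁆ * w = w * ⁅x, s ^ k⁆ := fun k w =>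
          hAc _ (hAmem x hxl _) w
        have e1 : ⁅x, s⁆ ^ nn = ⁅x, s ^ nn⁆ := (comm_pow_right x s hcen1 nn).symm
        set y := s ^ nn with hy
        have hcen2 : ∀ (k : ℕ) (w : G), ⁅x ^ k, y⁆ * w = w * ⁅x ^ k, y⁆ := fun k w =>
          hAc _ (hAmem _ (hxpow k) _) w
        have e2 : ⁅x, y⁆ ^ N = ⁅x ^ N, y⁆ := (comm_pow_left x y hcen2 N).symm
        have hxN : x ^ N ∈ ((H : Set G) * (A : Set G)) := by
          rw [← Subgroup.mul_normal H A]
          exact hNmem x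
        obtain ⟨h₀, hh₀, a, ha, hdecomp⟩ := Set.mem_mul.mp hxN
        have e3 : ⁅x ^ N, y⁆ = ⁅h₀, y⁆ := by
          rw [← hdecomp]
          exact comm_central_left h₀ a y (fun g => hAc a ha g)
        refine ⟨nn * N, Nat.mul_pos hnn0 hN0, ?_⟩
        have e4 : ⁅x, s⁆ ^ (nn * N) = ⁅h₀, y⁆ := by
          rw [pow_mul, e1, e2, e3]
        rw [e4, commutatorElement_def]
        exact mul_mem (mul_mem (mul_mem hh₀ hnH) (inv_mem hh₀)) (inv_mem hnH)
    -- now work inside B := H ⊔ A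
    set B := H ⊔ A with hB
    have hHB : H ≤ B := le_sup_left
    have hAB : A ≤ B := le_sup_right
    -- commutators of elements of B lie in H
    have hBcomm : ∀ b ∈ B, ∀ b' ∈ B, ⁅b, b'⁆ ∈ H := by
      intro b hb b' hb'
      rw [← SetLike.mem_coe, Subgroup.mul_normal H A] at hb hb'
      obtain ⟨h₁, hh₁, a₁, ha₁, rfl⟩ := Set.mem_mul.mp hb
      obtain ⟨h₂, hh₂, a₂, ha₂, rfl⟩ := Set.mem_mul.mp hb'
      rw [comm_central_right _ _ _ (fun g => hAc a₂ ha₂ g),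
        comm_central_left _ _ _ (fun g => hAc a₁ ha₁ g), commutatorElement_def]
      exact mul_mem (mul_mem (mul_mem hh₁ hh₂) (inv_mem hh₁)) (inv_mem hh₂)
    haveI hH'n : (H.subgroupOf B).Normal := by
      constructor
      intro x hx g
      rw [Subgroup.mem_subgroupOf] at hx ⊢
      have : ((g * x * g⁻¹ : B) : G) = ⁅(g : G), (x : G)⁆ * (x : G) := by
        push_cast
        group
      rw [this]
      exact mul_mem (hBcomm _ g.2 _ (hHB hx)) hx
    set ρ := QuotientGroup.mk' (H.subgroupOf B) with hρ
    have hρs : Function.Surjective ρ := QuotientGroup.mk'_surjective _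
    have hQ2comm : ∀ q r : B ⧸ H.subgroupOf B, q * r = r * q := by
      intro q r
      obtain ⟨b, rfl⟩ := hρs q
      obtain ⟨b', rfl⟩ := hρs r
      rw [← map_mul, ← map_mul]
      show QuotientGroup.mk _ = QuotientGroup.mk _
      rw [QuotientGroup.eq]
      rw [Subgroup.mem_subgroupOf]
      have : (((b * b')⁻¹ * (b' * b) : B) : G) = ⁅(b' : G)⁻¹, (b : G)⁻¹⁆ := by
        push_cast
        group
      rw [this]
      exact hBcomm _ (inv_mem b'.2) _ (inv_mem b.2)
    -- generators of the quotient
    set TB : Set B := (Subtype.val) ⁻¹' (comms S m) with hTB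
    have hTBfin : TB.Finite :=
      Set.Finite.preimage (Set.injOn_of_injective Subtype.val_injective) (comms_finite hSfin m)
    have hTBim : ⇑B.subtype '' TB = comms S m := by
      apply Set.image_preimage_eq_of_subset
      intro t ht
      exact ⟨⟨t, hAB (hcsub ht)⟩, rfl⟩
    have hmapsup : Subgroup.map B.subtype (Subgroup.closure TB ⊔ H.subgroupOf B) = B := by
      rw [Subgroup.map_sup, MonoidHom.map_closure, hTBim, hgenA,
        Subgroup.subgroupOf_map_subtype, inf_eq_left.mpr hHB, sup_comm]
    have hstep1 : Subgroup.closure TB ⊔ H.subgroupOf B = ⊤ := by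
      apply Subgroup.map_injective B.subtype_injective
      rw [hmapsup, ← MonoidHom.range_eq_map, Subgroup.range_subtype]
    have hstep2 : Subgroup.closure (⇑ρ '' TB) = ⊤ := by
      have h5 : Subgroup.map ρ (Subgroup.closure TB ⊔ H.subgroupOf B) = ⊤ := by
        rw [hstep1, Subgroup.map_top_of_surjective ρ hρs]
      rw [Subgroup.map_sup, MonoidHom.map_closure,
        (Subgroup.map_eq_bot_iff _).mpr (le_of_eq (QuotientGroup.ker_mk' _).symm),
        sup_bot_eq] at h5
      exact h5
    have habel : (⊥ : Subgroup (B ⧸ H.subgroupOf B)).index ≠ 0 := by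
      refine abelian_case hQ2comm ⊥ (⇑ρ '' TB) (hTBfin.image _) hstep2 ?_
      rintro _ ⟨b, hb, rfl⟩
      obtain ⟨M, hM0, hMH⟩ := hcpow _ hb
      refine ⟨M, hM0, ?_⟩
      rw [Subgroup.mem_bot, ← map_pow, hρ, QuotientGroup.mk'_apply, QuotientGroup.eq_one_iff]
      rw [Subgroup.mem_subgroupOf]
      push_cast
      exact hMH
    have hrel : H.relIndex B ≠ 0 := by
      show (H.subgroupOf B).index ≠ 0
      have h6 : (H.subgroupOf B).index = (⊥ : Subgroup (B ⧸ H.subgroupOf B)).index := by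
        rw [Subgroup.index_bot, Subgroup.index_eq_card]
      rw [h6]
      exact habel
    have h7 := Subgroup.relIndex_mul_index hHB
    intro h0
    rw [h0] at h7
    rcases Nat.mul_eq_zero.mp h7 with h | h
    exacts [hrel h, hBind h]

end IsolPf

theorem finite_relindex_and_radical_eq {G : Type*} [Group G]
    [Group.FG G] [Group.IsNilpotent G]
    (H K : Subgroup G) (hHK : H ≤ K) (S : Finset G)
    (hgen : Subgroup.closure (S : Set G) = K)
    (hpow : ∀ x ∈ S, ∃ m : ℕ, 0 < m ∧ x ^ m ∈ H) :
    H.relIndex K ≠ 0 ∧ H.radical = K.radical := by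
  constructor
  · -- finite relative index
    obtain ⟨m, hm⟩ := nilpotent_iff_lowerCentralSeries.mp
      (inferInstance : Group.IsNilpotent ↥K)
    have hSK : (S : Set G) ⊆ (K : Set G) := by
      rw [← hgen]; exact Subgroup.subset_closure
    set SK : Set ↥K := ⇑K.subtype ⁻¹' (S : Set G) with hSKdef
    have hSKfin : SK.Finite :=
      Set.Finite.preimage (Set.injOn_of_injective K.subtype_injective) S.finite_toSet
    have hSKim : ⇑K.subtype '' SK = (S : Set G) := by
      apply Set.image_preimage_eq_of_subset
      intro t ht
      exact ⟨⟨t, hSK ht⟩, rfl⟩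
    have hSKgen : Subgroup.closure SK = ⊤ := by
      apply Subgroup.map_injective K.subtype_injective
      rw [MonoidHom.map_closure, hSKim, hgen, ← MonoidHom.range_eq_map,
        Subgroup.range_subtype]
    have hSKpow : ∀ s ∈ SK, ∃ n : ℕ, 0 < n ∧ s ^ n ∈ H.subgroupOf K := by
      intro s hs
      obtain ⟨n, hn0, hnH⟩ := hpow (s : G) hs
      refine ⟨n, hn0, ?_⟩
      rw [Subgroup.mem_subgroupOf]
      push_cast
      exact hnH
    exact IsolPf.main_lemma m (H.subgroupOf K) SK hSKfin hSKgen hm hSKpow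
  · -- equality of radicals
    have hKrad : K ≤ H.radical := by
      rw [← hgen]
      refine (Subgroup.closure_le _).mpr ?_
      intro s hs
      obtain ⟨n, hn0, hnH⟩ := hpow s hs
      exact IsolPf.radical_root H hn0 (IsolPf.le_radical H hnH)
    exact le_antisymm (IsolPf.radical_mono hHK) (IsolPf.radical_le_radical_of_le hKrad)
end
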